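/- Every finite group G of even order admits a generating set S such that Player 1 has a winning strategy for RAV(G,S). -/

import Mathlib

namespace RelatorGames

variable {G : Type*} [Group G]

/-- The letters available in the relator games: elements of `S` and their inverses. -/
def letters (S : Set G) : Set G := S ∪ (fun g => g⁻¹) '' S

/-- Evaluate a history of moves (most recent letter first) to a group element:
the group element represented by the word built so far. -/
def eval (h : List G) : G := h.reverse.prod

/-- A move `m` is legal after history `h`: it is a letter of `S ∪ S⁻¹` and it is not
the inverse of the immediately preceding letter (no backtracking). -/
def LegalMove (S : Set G) (h : List G) (m : G) : Prop :=
  m ∈ letters S ∧ ∀ p ∈ h.head?, m ≠ p⁻¹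

/-- Appending `m` to the history `h` produces a word equal in `G` to some earlier
prefix of the word (equivalently, the walk in the Cayley graph revisits a vertex). -/
def ClosesCycle (h : List G) (m : G) : Prop :=
  ∃ t, t <:+ h ∧ eval t = eval (m :: h)

/-- A strategy: a choice of next letter given the history (most recent letter first). -/
abbrev Strategy (G : Type*) := List G → G

/-- The sequence of histories arising when the first player (moving at even steps)
uses `σ` and the second player (moving at odd steps) uses `τ`. -/
def hist (σ τ : Strategy G) : ℕ → List G
  | 0 => []
  | k + 1 =>
      (if k % 2 = 0 then σ (hist σ τ k) else τ (hist σ τ k)) :: hist σ τ k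

/-- The move made at step `k` in the play of `σ` against `τ`. -/
def moveAt (σ τ : Strategy G) (k : ℕ) : G :=
  if k % 2 = 0 then σ (hist σ τ k) else τ (hist σ τ k)

/-- Step `j` is uneventful: the move made is legal and does not close a cycle. -/
def Ok (S : Set G) (σ τ : Strategy G) (j : ℕ) : Prop :=
  LegalMove S (hist σ τ j) (moveAt σ τ j) ∧ ¬ ClosesCycle (hist σ τ j) (moveAt σ τ j)

/-- In the play of `σ` against `τ`, the player moving at steps congruent to `p` mod 2
wins the relator achievement game `REL(G,S)`: at the first eventful step, either it is
that player's turn and they legally close a cycle, or it is the opponent's turn and the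
opponent has made an illegal move (in particular, has no legal move). -/
def RelWins (S : Set G) (p : ℕ) (σ τ : Strategy G) : Prop :=
  ∃ k : ℕ, (∀ j < k, Ok S σ τ j) ∧
    ((k % 2 = p ∧ LegalMove S (hist σ τ k) (moveAt σ τ k) ∧
        ClosesCycle (hist σ τ k) (moveAt σ τ k)) ∨
      (k % 2 ≠ p ∧ ¬ LegalMove S (hist σ τ k) (moveAt σ τ k)))

/-- In the play of `σ` against `τ`, the player moving at steps congruent to `p` mod 2
wins the relator avoidance game `RAV(G,S)`: at the first eventful step it is the
opponent's turn, and the opponent either makes an illegal move (in particular, has no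
legal move) or closes a cycle. -/
def RavWins (S : Set G) (p : ℕ) (σ τ : Strategy G) : Prop :=
  ∃ k : ℕ, (∀ j < k, Ok S σ τ j) ∧ k % 2 ≠ p ∧
    (¬ LegalMove S (hist σ τ k) (moveAt σ τ k) ∨ ClosesCycle (hist σ τ k) (moveAt σ τ k))

/-- Player 1 has a winning strategy for `REL(G,S)`. -/
def FirstWinsREL (S : Set G) : Prop :=
  ∃ σ : Strategy G, ∀ τ : Strategy G, RelWins S 0 σ τ

/-- Player 2 has a winning strategy for `REL(G,S)`. -/
def SecondWinsREL (S : Set G) : Prop :=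
  ∃ τ : Strategy G, ∀ σ : Strategy G, RelWins S 1 σ τ

/-- Player 1 has a winning strategy for `RAV(G,S)`. -/
def FirstWinsRAV (S : Set G) : Prop :=
  ∃ σ : Strategy G, ∀ τ : Strategy G, RavWins S 0 σ τ

/-- Player 2 has a winning strategy for `RAV(G,S)`. -/
def SecondWinsRAV (S : Set G) : Prop :=
  ∃ τ : Strategy G, ∀ σ : Strategy G, RavWins S 1 σ τ

end RelatorGames

open RelatorGames

set_option linter.unusedSectionVars false

section Aux
variable {G : Type*} [Group G]

lemma hist_succ' (σ τ : Strategy G) (k : ℕ) :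
    hist σ τ (k+1) = moveAt σ τ k :: hist σ τ k := rfl

lemma eval_cons' (m : G) (h : List G) : eval (m :: h) = eval h * m := by
  simp [eval]

lemma hist_suffix' (σ τ : Strategy G) {i j : ℕ} (h : i ≤ j) :
    hist σ τ i <:+ hist σ τ j := by
  induction j with
  | zero => simp_all
  | succ j ih =>
    rcases eq_or_lt_of_le h with h' | h'
    · rw [h']
    · exact (ih (Nat.lt_succ_iff.mp h')).trans (List.suffix_cons _ _)

lemma suffix_hist' (σ τ : Strategy G) {k : ℕ} {s : List G} (hs : s <:+ hist σ τ k) :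
    ∃ i ≤ k, s = hist σ τ i := by
  induction k with
  | zero => exact ⟨0, le_rfl, List.suffix_nil.mp hs⟩
  | succ k ih =>
    rw [hist_succ'] at hs
    rcases List.suffix_cons_iff.mp hs with h | h
    · exact ⟨k+1, le_rfl, h⟩
    · obtain ⟨i, hi, h⟩ := ih h
      exact ⟨i, hi.trans (Nat.le_succ _), h⟩

lemma eval_ne' {S : Set G} (σ τ : Strategy G) {k : ℕ} (hok : ∀ j < k, Ok S σ τ j)
    {i j : ℕ} (hij : i < j) (hj : j ≤ k) :
    eval (hist σ τ i) ≠ eval (hist σ τ j) := by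
  obtain ⟨j, rfl⟩ := Nat.exists_eq_add_of_lt hij
  intro he
  exact (hok (i + j) (by omega)).2
    ⟨hist σ τ i, hist_suffix' σ τ (by omega), by rw [← hist_succ'] at *; exact he⟩

end Aux

open RelatorGames in
/-- Every finite group of even order admits a generating set `S`
(not containing the identity) for which Player 1 wins `RAV(G,S)`. -/
theorem rav_even_order_exists_generating_set {G : Type*} [Group G] [Fintype G]
    (heven : Even (Fintype.card G)) :
    ∃ S : Set G, Subgroup.closure S = ⊤ ∧ (1 : G) ∉ S ∧ FirstWinsRAV S := by
  classical
  have hdvd : 2 ∣ Fintype.card G := heven.two_dvd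
  haveI : Fact (Nat.Prime 2) := ⟨Nat.prime_two⟩
  obtain ⟨t, ht⟩ := exists_prime_orderOf_dvd_card 2 hdvd
  have ht1 : t ≠ 1 := by
    intro h; rw [h, orderOf_one] at ht; omega
  have htt : t * t = 1 := by
    have := pow_orderOf_eq_one t; rw [ht, sq] at this; exact this
  have htinv : t⁻¹ = t := by
    rw [inv_eq_iff_mul_eq_one]; exact htt
  refine ⟨{g : G | g ≠ 1}, ?_, by simp, ?_⟩
  · rw [eq_top_iff]
    intro g _
    by_cases hg : g = 1
    · rw [hg]; exact (Subgroup.closure _).one_mem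
    · exact Subgroup.subset_closure hg
  set S : Set G := {g : G | g ≠ 1} with hS
  -- Player 1's strategy: always play t
  refine ⟨fun _ => t, fun τ => ?_⟩
  set σ : Strategy G := fun _ => t with hσ
  -- at even steps, the move is t
  have hmove : ∀ k, k % 2 = 0 → moveAt σ τ k = t := by
    intro k hk; simp [moveAt, hk]; rfl
  -- key: if all steps < k are Ok and k is even, then step k is Ok
  have key : ∀ k, (∀ j < k, Ok S σ τ j) → k % 2 = 0 → Ok S σ τ k := by
    intro k hok hk
    have hmk : moveAt σ τ k = t := hmove k hk
    constructor
    · constructor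
      · exact Set.mem_union_left _ (by rw [hmk]; exact ht1)
      · intro p hp
        -- hist k is nonempty, k ≥ 2 even, head = moveAt (k-1)
        match k, hk with
        | 0, _ => simp [RelatorGames.hist] at hp
        | (k+2), hk =>
          have hk0 : k % 2 = 0 := by omega
          have hp' : p = moveAt σ τ (k+1) := by
            rw [hist_succ'] at hp; simpa using hp.symm
          have hleg := (hok (k+1) (by omega)).1.2
          have hhead : (hist σ τ (k+1)).head? = some (moveAt σ τ k) := by
            rw [hist_succ']; rfl
          have h2 : moveAt σ τ (k+1) ≠ (moveAt σ τ k)⁻¹ := by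
            apply hleg; rw [hhead]; rfl
          rw [hmove k hk0, htinv] at h2
          rw [hmk, hp']
          intro hcon
          exact h2 (by rw [← htinv, hcon, inv_inv])
    · rintro ⟨s, hs, hes⟩
      obtain ⟨i, hik, rfl⟩ := suffix_hist' σ τ hs
      rw [eval_cons', hmk] at hes
      -- eval (hist i) = eval (hist k) * t
      rcases Nat.lt_or_ge i k with hilt | hige
      · rcases Nat.even_or_odd i with ⟨m, hm⟩ | ⟨m, hm⟩
        · -- i even, i < k: eval (hist (i+1)) = eval (hist i) * t = eval (hist k)*t*t = eval (hist k)
          have hi0 : i % 2 = 0 := by omega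
          have h1 : eval (hist σ τ (i+1)) = eval (hist σ τ i) * t := by
            rw [hist_succ', eval_cons', hmove i hi0]
          rw [hes, mul_assoc, htt, mul_one] at h1
          exact eval_ne' σ τ hok (show i + 1 < k by omega) le_rfl h1
        · subst hm
          have h1 : eval (hist σ τ (2*m+1)) = eval (hist σ τ (2*m)) * t := by
            rw [hist_succ', eval_cons', hmove (2*m) (by omega)]
          rw [hes] at h1
          exact eval_ne' σ τ hok (show 2*m < k by omega) le_rfl
            (mul_right_cancel h1).symm
      · have : i = k := le_antisymm hik hige
        rw [this] at hes
        exact ht1 (left_eq_mul.mp hes)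
  -- there is a first failing step, and it is odd
  have hbound : ¬ ∀ j < Fintype.card G, Ok S σ τ j := by
    intro hall
    have hinj : Function.Injective (fun i : Fin (Fintype.card G + 1) => eval (hist σ τ i)) := by
      intro a b hab
      by_contra hne
      have ha := a.isLt
      have hb := b.isLt
      rcases Nat.lt_or_ge (a : ℕ) (b : ℕ) with h | h
      · exact eval_ne' σ τ (k := Fintype.card G) (fun j hj => hall j hj) h
          (by omega) hab
      · have h' : (b : ℕ) < (a : ℕ) :=
          lt_of_le_of_ne h (fun he => hne (Fin.ext he.symm))
        exact eval_ne' σ τ (k := Fintype.card G) (fun j hj => hall j hj) h'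
          (by omega) hab.symm
    have := Fintype.card_le_of_injective _ hinj
    simp at this
  push_neg at hbound
  have hex : ∃ k, ¬ Ok S σ τ k := by
    obtain ⟨j, _, hj⟩ := hbound; exact ⟨j, hj⟩
  set k := Nat.find hex with hk
  have hkbad : ¬ Ok S σ τ k := Nat.find_spec hex
  have hkok : ∀ j < k, Ok S σ τ j := fun j hj => by
    by_contra h; exact absurd (Nat.find_le h) (not_le.mpr hj)
  have hkodd : k % 2 ≠ 0 := fun h => hkbad (key k hkok h)
  refine ⟨k, hkok, hkodd, ?_⟩
  rw [Ok, not_and_or, not_not] at hkbad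
  exact hkbad
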